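/- Let G = (V, E) be a finite multigraph, let x ≥ y ≥ 0 be integers, and let e ∈ E be any edge. Then the bivariate chromatic polynomial satisfies P(G, x, y) = P(G_{−e}, x, y) − P(G_{/e}, x, y) + (x − y)·P(G_{†e}, x, y). Moreover, P(G₁ ⊕ G₂, x, y) = P(G₁, x, y)·P(G₂, x, y), P(E₁, x, y) = x, and P(∅, x, y) = 1. -/

import Mathlib

/-- A finite multigraph: finite vertex and edge types, each edge assigned an
unordered pair of (not necessarily distinct) endpoints. -/
structure Multigraph where
  V : Type
  E : Type
  [fintypeV : Fintype V]
  [decEqV : DecidableEq V]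
  [fintypeE : Fintype E]
  [decEqE : DecidableEq E]
  ends : E → Sym2 V

namespace Multigraph

attribute [instance] fintypeV decEqV fintypeE decEqE

/-- The empty multigraph. -/
def emptyGraph : Multigraph where
  V := Empty
  E := Empty
  ends := fun e => e.elim

/-- The one-vertex multigraph `E₁` with no edges. -/
def singleVertex : Multigraph where
  V := Unit
  E := Empty
  ends := fun e => e.elim

/-- Disjoint union of multigraphs. -/
def disjUnion (G₁ G₂ : Multigraph) : Multigraph where
  V := G₁.V ⊕ G₂.V
  E := G₁.E ⊕ G₂.E
  ends := Sum.elim (fun e => (G₁.ends e).map Sum.inl) (fun e => (G₂.ends e).map Sum.inr)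

/-- Deletion of an edge. -/
def deleteEdge (G : Multigraph) (e : G.E) : Multigraph where
  V := G.V
  E := {e' : G.E // e' ≠ e}
  ends := fun e' => G.ends e'.val

/-- Contraction of an edge: its endpoints are identified
(replaced by a single new vertex) and the edge is removed. -/
def contractEdge (G : Multigraph) (e : G.E) : Multigraph where
  V := {v : G.V // v ∉ G.ends e} ⊕ Unit
  E := {e' : G.E // e' ≠ e}
  ends := fun e' => (G.ends e'.val).map
    (fun v => if h : v ∈ G.ends e then Sum.inr () else Sum.inl ⟨v, h⟩)

/-- Extraction of an edge: both endpoints are deleted together with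
all incident edges. -/
def extractEdge (G : Multigraph) (e : G.E) : Multigraph where
  V := {v : G.V // v ∉ G.ends e}
  E := {e' : G.E // ∀ v : G.V, v ∈ G.ends e' → v ∉ G.ends e}
  ends := fun e' => (G.ends e'.val).attachWith (fun v hv => e'.prop v hv)

/-- Deletion of a vertex (together with all incident edges). -/
def deleteVertex (G : Multigraph) (v : G.V) : Multigraph where
  V := {w : G.V // w ≠ v}
  E := {e : G.E // v ∉ G.ends e}
  ends := fun e => (G.ends e.val).attachWith
    (fun w hw => fun hwv => e.prop (hwv ▸ hw))

/-- Number of connected components of the spanning subgraph `(V, S)`. -/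
noncomputable def k (G : Multigraph) (S : Finset G.E) : ℕ :=
  Nat.card (Quot (fun u v : G.V => ∃ e ∈ S, G.ends e = s(u, v)))

/-- Number of connected components of `(V(S), S)`, the graph on the vertices
covered by `S`. -/
noncomputable def kcov (G : Multigraph) (S : Finset G.E) : ℕ :=
  Nat.card (Quot (fun u v : {w : G.V // ∃ e ∈ S, w ∈ G.ends e} =>
    ∃ e ∈ S, G.ends e = s(u.val, v.val)))

/-- `V(A)` and `V(B)` are disjoint. -/
def CovDisjoint (G : Multigraph) (A B : Finset G.E) : Prop :=
  ∀ v : G.V, (∃ e ∈ A, v ∈ G.ends e) → ¬ (∃ e ∈ B, v ∈ G.ends e)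

instance (G : Multigraph) (A B : Finset G.E) : Decidable (G.CovDisjoint A B) := by
  unfold CovDisjoint; infer_instance

/-- The edge elimination polynomial (evaluated at `x y z` in a commutative ring):
`ξ(G,x,y,z) = Σ_{(A ⊔ B) ⊆ E} x^{k(A∪B)-k_cov(B)} y^{|A|+|B|-k_cov(B)} z^{k_cov(B)}`. -/
noncomputable def xi {R : Type*} [CommRing R] (G : Multigraph) (x y z : R) : R :=
  ∑ A : Finset G.E, ∑ B : Finset G.E,
    if G.CovDisjoint A B then
      x ^ (G.k (A ∪ B) - G.kcov B) * y ^ (A.card + B.card - G.kcov B) * z ^ G.kcov B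
    else 0

/-- Isomorphism of multigraphs. -/
structure Iso (G H : Multigraph) where
  vEquiv : G.V ≃ H.V
  eEquiv : G.E ≃ H.E
  ends_map : ∀ e : G.E, H.ends (eEquiv e) = (G.ends e).map vEquiv

end Multigraph

/-- `φ : V → Fin x` is a generalized proper coloring with the first `y` colors proper:
for every edge with endpoints `u, v` it is not the case that both endpoints get proper
colors and the same color.  (For a loop this forces its vertex to get a non-proper
color, and multiple edges impose no extra condition.) -/
def Multigraph.IsDPTColoring (G : Multigraph) {x : ℕ} (y : ℕ) (φ : G.V → Fin x) : Prop :=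
  ∀ (e : G.E) (u v : G.V), G.ends e = s(u, v) →
    ¬ ((φ u).val < y ∧ (φ v).val < y ∧ φ u = φ v)

/-- The bivariate (Dohmen–Pönitz–Tittmann) chromatic polynomial: the number of
generalized proper colorings with `x` colors, `y` of them proper. -/
noncomputable def Multigraph.chromP (G : Multigraph) (x y : ℕ) : ℕ :=
  Nat.card {φ : G.V → Fin x // G.IsDPTColoring y φ}


section Helpers

def Bad {V : Type} {x : ℕ} (y : ℕ) (φ : V → Fin x) (s : Sym2 V) : Prop :=
  ∃ u v, s = s(u, v) ∧ (φ u).val < y ∧ (φ v).val < y ∧ φ u = φ v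

lemma bad_mk {V : Type} {x : ℕ} (y : ℕ) (φ : V → Fin x) (a b : V) :
    Bad y φ s(a, b) ↔ (φ a).val < y ∧ (φ b).val < y ∧ φ a = φ b := by
  constructor
  · rintro ⟨u, v, h, h1, h2, h3⟩
    rw [Sym2.eq_iff] at h
    rcases h with ⟨rfl, rfl⟩ | ⟨rfl, rfl⟩
    · exact ⟨h1, h2, h3⟩
    · exact ⟨h2, h1, h3.symm⟩
  · rintro ⟨h1, h2, h3⟩; exact ⟨a, b, rfl, h1, h2, h3⟩

lemma isDPT_iff (G : Multigraph) {x : ℕ} (y : ℕ) (φ : G.V → Fin x) :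
    G.IsDPTColoring y φ ↔ ∀ e, ¬ Bad y φ (G.ends e) := by
  constructor
  · rintro h e ⟨u, v, he, hc⟩
    exact h e u v he hc
  · intro h e u v he hc
    exact h e ⟨u, v, he, hc⟩

lemma bad_map {V W : Type} {x : ℕ} (y : ℕ) (φ : W → Fin x) (f : V → W) (s : Sym2 V) :
    Bad y φ (s.map f) ↔ Bad y (fun v => φ (f v)) s := by
  induction s using Sym2.ind with
  | _ a b => rw [Sym2.map_pair_eq, bad_mk, bad_mk]

lemma bad_attachWith {V : Type} {x : ℕ} (y : ℕ) {p : V → Prop}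
    (χ : {v // p v} → Fin x) (g : V → Fin x) (s : Sym2 V) (h : ∀ v ∈ s, p v)
    (hg : ∀ v (hv : p v), g v = χ ⟨v, hv⟩) :
    Bad y χ (s.attachWith h) ↔ Bad y g s := by
  revert h
  induction s using Sym2.ind with
  | _ a b =>
    intro h
    rw [Sym2.attachWith, Sym2.pmap_pair, bad_mk, bad_mk, hg a, hg b]

lemma card_split {α : Type} [Finite α] (P Q : α → Prop) :
    Nat.card {a // P a} = Nat.card {a // P a ∧ Q a} + Nat.card {a // P a ∧ ¬ Q a} := by
  classical
  rw [← Nat.card_sum]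
  apply Nat.card_congr
  calc {a // P a} ≃ {a : {a // P a} // Q a.val} ⊕ {a : {a // P a} // ¬ Q a.val} :=
        (Equiv.sumCompl _).symm
    _ ≃ _ := Equiv.sumCongr (Equiv.subtypeSubtypeEquivSubtypeInter P Q)
        (Equiv.subtypeSubtypeEquivSubtypeInter P (fun a => ¬ Q a))

end Helpers

open Multigraph in
/-- For integers `x ≥ y ≥ 0` the bivariate chromatic polynomial
satisfies `P(G) = P(G₋ₑ) − P(G/e) + (x−y)·P(G†e)`, is multiplicative over disjoint
union, and `P(E₁) = x`, `P(∅) = 1`. -/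
theorem chromP_edge_elimination (G : Multigraph) (x y : ℕ) (hxy : y ≤ x) (e : G.E) :
    ((G.chromP x y : ℤ) = (G.deleteEdge e).chromP x y - (G.contractEdge e).chromP x y
        + ((x : ℤ) - (y : ℤ)) * (G.extractEdge e).chromP x y)
    ∧ (∀ G₁ G₂ : Multigraph, (G₁.disjUnion G₂).chromP x y = G₁.chromP x y * G₂.chromP x y)
    ∧ Multigraph.singleVertex.chromP x y = x
    ∧ Multigraph.emptyGraph.chromP x y = 1 := by
  refine ⟨?_, ?_, ?_, ?_⟩
  · -- deletion–contraction–extraction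
    classical
    obtain ⟨u, v, hw⟩ : ∃ u v, G.ends e = s(u, v) :=
      Sym2.ind (fun a b => ⟨a, b, rfl⟩) (G.ends e)
    have hu : u ∈ G.ends e := by rw [hw]; exact Sym2.mem_mk_left u v
    have hv : v ∈ G.ends e := by rw [hw]; exact Sym2.mem_mk_right u v
    set fmap : G.V → (G.contractEdge e).V :=
      fun w => if h : w ∈ G.ends e then Sum.inr () else Sum.inl ⟨w, h⟩ with hfmap_def
    have hfmap_mem : ∀ w (h : w ∈ G.ends e), fmap w = Sum.inr () := fun w h => dif_pos h
    have hfmap_not : ∀ w (h : w ∉ G.ends e), fmap w = Sum.inl ⟨w, h⟩ := fun w h => dif_neg h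
    have hends_c : ∀ e' : (G.contractEdge e).E,
        (G.contractEdge e).ends e' = (G.ends e'.val).map fmap := fun _ => rfl
    have hC_iff : ∀ ψ : (G.contractEdge e).V → Fin x,
        (G.contractEdge e).IsDPTColoring y ψ ↔
          (G.deleteEdge e).IsDPTColoring y (fun w => ψ (fmap w)) := by
      intro ψ
      simp only [isDPT_iff, hends_c, bad_map]
      exact Iff.rfl
    have hproper_iff : ∀ ψ : (G.contractEdge e).V → Fin x,
        ((ψ (Sum.inr ())).val < y ↔ Bad y (fun w => ψ (fmap w)) (G.ends e)) := by
      intro ψ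
      have hb : Bad y (fun w => ψ (fmap w)) (G.ends e)
          = Bad y (fun w => ψ (fmap w)) s(u, v) := congrArg _ hw
      rw [hb]
      simp only [bad_mk, hfmap_mem u hu, hfmap_mem v hv, and_self, and_true, iff_self_and]
    -- the deletion side
    have hD : (G.deleteEdge e).chromP x y
        = Nat.card {φ : G.V → Fin x //
            (G.deleteEdge e).IsDPTColoring y φ ∧ Bad y φ (G.ends e)} + G.chromP x y := by
      show Nat.card {φ : G.V → Fin x // (G.deleteEdge e).IsDPTColoring y φ}
          = Nat.card {φ : G.V → Fin x //
              (G.deleteEdge e).IsDPTColoring y φ ∧ Bad y φ (G.ends e)}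
            + Nat.card {φ : G.V → Fin x // G.IsDPTColoring y φ}
      rw [card_split (fun φ : G.V → Fin x => (G.deleteEdge e).IsDPTColoring y φ)
        (fun φ => Bad y φ (G.ends e))]
      congr 1
      apply Nat.card_congr
      apply Equiv.subtypeEquivRight
      intro φ
      constructor
      · rintro ⟨hDφ, hnb⟩
        rw [isDPT_iff]
        intro e'
        by_cases he' : e' = e
        · subst he'; exact hnb
        · exact (isDPT_iff _ _ _).mp hDφ ⟨e', he'⟩
      · intro hA
        exact ⟨(isDPT_iff _ _ _).mpr fun e' => (isDPT_iff _ _ _).mp hA e'.val,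
          (isDPT_iff _ _ _).mp hA e⟩
    -- the contraction side, proper part
    have hF : Nat.card {ψ : (G.contractEdge e).V → Fin x //
          (G.contractEdge e).IsDPTColoring y ψ ∧ (ψ (Sum.inr ())).val < y}
        = Nat.card {φ : G.V → Fin x //
            (G.deleteEdge e).IsDPTColoring y φ ∧ Bad y φ (G.ends e)} := by
      set ext : (G.V → Fin x) → ((G.contractEdge e).V → Fin x) :=
        fun φ => Sum.elim (fun w => φ w.val) (fun _ => φ u) with hext_def
      have key : ∀ (φ : G.V → Fin x), Bad y φ (G.ends e) →
          (fun w => ext φ (fmap w)) = φ := by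
        intro φ hB
        funext w
        by_cases h : w ∈ G.ends e
        · show ext φ (fmap w) = φ w
          rw [hfmap_mem w h]
          show φ u = φ w
          rw [hw] at h
          rcases Sym2.mem_iff.mp h with rfl | rfl
          · rfl
          · rw [hw, bad_mk] at hB
            exact hB.2.2
        · show ext φ (fmap w) = φ w
          rw [hfmap_not w h]
          rfl
      apply Nat.card_congr
      refine ⟨fun ψ => ⟨fun w => ψ.val (fmap w),
          (hC_iff ψ.val).mp ψ.prop.1, (hproper_iff ψ.val).mp ψ.prop.2⟩,
        fun φ => ⟨ext φ.val, ?_, ?_⟩, ?_, ?_⟩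
      · rw [hC_iff]
        have haux : ∀ (f : (G.deleteEdge e).V → Fin x), f = φ.val →
            (G.deleteEdge e).IsDPTColoring y f := by
          rintro f rfl; exact φ.prop.1
        exact haux _ (key φ.val φ.prop.2)
      · rw [hproper_iff]
        have haux : ∀ (f : G.V → Fin x), f = φ.val → Bad y f (G.ends e) := by
          rintro f rfl; exact φ.prop.2
        exact haux _ (key φ.val φ.prop.2)
      · rintro ⟨ψ, hψ⟩
        apply Subtype.ext
        funext w
        rcases w with ⟨w, hwn⟩ | ⟨⟩
        · show ψ (fmap w) = ψ (Sum.inl ⟨w, hwn⟩)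
          rw [hfmap_not w hwn]
        · show ψ (fmap u) = ψ (Sum.inr ())
          rw [hfmap_mem u hu]
      · rintro ⟨φ, hφ⟩
        exact Subtype.ext (key φ hφ.2)
    -- the contraction side, improper part
    have hX_iff : ∀ ψ : (G.contractEdge e).V → Fin x, ¬ (ψ (Sum.inr ())).val < y →
        ((G.contractEdge e).IsDPTColoring y ψ ↔
          (G.extractEdge e).IsDPTColoring y (fun w => ψ (Sum.inl w))) := by
      intro ψ hnp
      rw [hC_iff, isDPT_iff, isDPT_iff]
      have hatt : ∀ (f : G.E) (hf : ∀ w ∈ G.ends f, w ∉ G.ends e),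
          (Bad y (fun w : {w // w ∉ G.ends e} => ψ (Sum.inl w))
            ((G.ends f).attachWith hf)
          ↔ Bad y (fun w => ψ (fmap w)) (G.ends f)) := by
        intro f hf
        apply bad_attachWith
        intro w hw'
        rw [hfmap_not w hw']
      constructor
      · intro h e'
        have hne : e'.val ≠ e := fun heq => (e'.prop u (by rw [heq]; exact hu)) hu
        exact fun hb => h ⟨e'.val, hne⟩
          ((hatt e'.val (fun w hw' => e'.prop w hw')).mp hb)
      · intro h e'
        by_cases hdis : ∀ w ∈ G.ends e'.val, w ∉ G.ends e
        · exact fun hb => h ⟨e'.val, hdis⟩ ((hatt e'.val hdis).mpr hb)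
        · push_neg at hdis
          obtain ⟨w, hw1, hw2⟩ := hdis
          rintro ⟨a, b, hab, c1, c2, c3⟩
          rw [show G.ends e'.val = s(a, b) from hab] at hw1
          rcases Sym2.mem_iff.mp hw1 with rfl | rfl
          · simp only [hfmap_mem _ hw2] at c1
            exact hnp c1
          · simp only [hfmap_mem _ hw2] at c2
            exact hnp c2
    have hI : Nat.card {ψ : (G.contractEdge e).V → Fin x //
          (G.contractEdge e).IsDPTColoring y ψ ∧ ¬ (ψ (Sum.inr ())).val < y}
        = (x - y) * (G.extractEdge e).chromP x y := by
      have hstep : Nat.card {ψ : (G.contractEdge e).V → Fin x //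
            (G.contractEdge e).IsDPTColoring y ψ ∧ ¬ (ψ (Sum.inr ())).val < y}
          = Nat.card ({c : Fin x // ¬ c.val < y} ×
              {χ : (G.extractEdge e).V → Fin x // (G.extractEdge e).IsDPTColoring y χ}) := by
        apply Nat.card_congr
        refine ⟨fun ψ => (⟨ψ.val (Sum.inr ()), ψ.prop.2⟩,
            ⟨fun w => ψ.val (Sum.inl w), (hX_iff ψ.val ψ.prop.2).mp ψ.prop.1⟩),
          fun p => ⟨Sum.elim (fun w => p.2.val w) (fun _ => p.1.val), ?_, p.1.prop⟩, ?_, ?_⟩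
        · exact (hX_iff _ p.1.prop).mpr p.2.prop
        · rintro ⟨ψ, hψ⟩
          apply Subtype.ext
          funext w
          rcases w with w | ⟨⟩ <;> rfl
        · rintro ⟨c, χ⟩
          rfl
      rw [hstep, Nat.card_prod]
      have hylt : Fintype.card {c : Fin x // c.val < y} = y := by
        have heq : {c : Fin x // c.val < y} ≃ Fin y :=
          ⟨fun c => ⟨c.val.val, c.prop⟩,
            fun i => ⟨⟨i.val, lt_of_lt_of_le i.isLt hxy⟩, i.isLt⟩,
            fun c => Subtype.ext (Fin.ext rfl), fun i => rfl⟩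
        rw [Fintype.card_congr heq, Fintype.card_fin]
      have hcard : Nat.card {c : Fin x // ¬ c.val < y} = x - y := by
        rw [Nat.card_eq_fintype_card, Fintype.card_subtype_compl, Fintype.card_fin, hylt]
      rw [hcard]
      rfl
    have hC2 : (G.contractEdge e).chromP x y
        = Nat.card {φ : G.V → Fin x //
            (G.deleteEdge e).IsDPTColoring y φ ∧ Bad y φ (G.ends e)}
          + (x - y) * (G.extractEdge e).chromP x y := by
      show Nat.card {ψ : (G.contractEdge e).V → Fin x //
          (G.contractEdge e).IsDPTColoring y ψ} = _
      rw [card_split (fun ψ : (G.contractEdge e).V → Fin x =>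
        (G.contractEdge e).IsDPTColoring y ψ) (fun ψ => (ψ (Sum.inr ())).val < y)]
      rw [hF, hI]
    have h1 := congrArg (Nat.cast (R := ℤ)) hD
    have h2 := congrArg (Nat.cast (R := ℤ)) hC2
    push_cast [Nat.cast_sub hxy] at h1 h2
    linarith
  · -- disjoint union
    intro G₁ G₂
    unfold Multigraph.chromP
    rw [← Nat.card_prod]
    apply Nat.card_congr
    refine Equiv.trans (Equiv.subtypeEquiv (Equiv.sumArrowEquivProdArrow _ _ _) ?_)
      (Equiv.subtypeProdEquivProd)
    intro φ
    simp only [isDPT_iff, Equiv.sumArrowEquivProdArrow]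
    constructor
    · intro h
      constructor
      · intro e'
        have := h (Sum.inl e')
        rw [show (G₁.disjUnion G₂).ends (Sum.inl e') = (G₁.ends e').map Sum.inl from rfl] at this
        exact fun hb => this ((bad_map y φ (Sum.inl : G₁.V → (G₁.disjUnion G₂).V) (G₁.ends e')).mpr hb)
      · intro e'
        have := h (Sum.inr e')
        rw [show (G₁.disjUnion G₂).ends (Sum.inr e') = (G₂.ends e').map Sum.inr from rfl] at this
        exact fun hb => this ((bad_map y φ (Sum.inr : G₂.V → (G₁.disjUnion G₂).V) (G₂.ends e')).mpr hb)
    · rintro ⟨h1, h2⟩ e'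
      cases e' with
      | inl e' =>
        rw [show (G₁.disjUnion G₂).ends (Sum.inl e') = (G₁.ends e').map Sum.inl from rfl]
        exact fun hb => h1 e' ((bad_map y φ (Sum.inl : G₁.V → (G₁.disjUnion G₂).V) (G₁.ends e')).mp hb)
      | inr e' =>
        rw [show (G₁.disjUnion G₂).ends (Sum.inr e') = (G₂.ends e').map Sum.inr from rfl]
        exact fun hb => h2 e' ((bad_map y φ (Sum.inr : G₂.V → (G₁.disjUnion G₂).V) (G₂.ends e')).mp hb)
  · -- single vertex
    unfold Multigraph.chromP
    have : Nat.card {φ : Unit → Fin x // Multigraph.singleVertex.IsDPTColoring y φ}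
        = Nat.card (Fin x) := by
      apply Nat.card_congr
      exact (Equiv.subtypeUnivEquiv (fun φ e => e.elim)).trans (Equiv.funUnique Unit (Fin x))
    exact this.trans (Nat.card_fin x)
  · -- empty graph
    unfold Multigraph.chromP
    rw [Nat.card_eq_one_iff_unique]
    refine ⟨⟨fun φ ψ => Subtype.ext (funext fun v => v.elim)⟩,
      ⟨⟨fun v => v.elim, fun e => e.elim⟩⟩⟩
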